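/- For the d-dimensional stochastic Burgers equation with V = 0 and noise potential k(x)·Ẇ = x·Ẇ(t), the minimizer of the stochastic action with endpoints X(0) = x₀, X(t) = x gives A(x₀,x,t) = |x−x₀|²/(2t) + (ε/t)(x−x₀)·∫₀ᵗW(s)ds − ε x·W(t) − (ε²/2)∫₀ᵗ|W(s)|²ds + (ε²/(2t))|∫₀ᵗW(s)ds|². -/

import Mathlib

open MeasureTheory intervalIntegral

/-- for the `d`-dimensional stochastic Burgers equation with `V = 0` and
noise potential `k(x)·Ẇ = x·Ẇ(t)`, the minimising path between `X(0) = x₀` and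
`X(t) = x` is `X(s) = x₀ + s p₀ − ε ∫₀ˢ W(u) du` with `p₀` chosen so that `X(t) = x`,
and its action (with the stochastic integral `∫₀ᵗ X·dW` written via integration by parts
as `x·W(t) − ∫₀ᵗ Ẋ(s)·W(s) ds`, using `W(0) = 0`) equals
`|x−x₀|²/(2t) + (ε/t)(x−x₀)·∫₀ᵗ W − ε x·W(t) − (ε²/2)∫₀ᵗ|W|² + (ε²/(2t))|∫₀ᵗ W|²`. -/
theorem stochastic_action_formula (d : ℕ)
    (W : ℝ → EuclideanSpace ℝ (Fin d)) (hW : Continuous W)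
    (hW0 : W 0 = 0)
    (ε t : ℝ) (ht : 0 < t)
    (x₀ x : EuclideanSpace ℝ (Fin d))
    (p₀ : EuclideanSpace ℝ (Fin d))
    (hp₀ : p₀ = t⁻¹ • (x - x₀ + ε • ∫ u in (0:ℝ)..t, W u))
    (X Xdot : ℝ → EuclideanSpace ℝ (Fin d))
    (hX : ∀ s, X s = x₀ + s • p₀ - ε • ∫ u in (0:ℝ)..s, W u)
    (hXdot : ∀ s, Xdot s = p₀ - ε • W s) :
    (1/2) * (∫ s in (0:ℝ)..t, ‖Xdot s‖^2)
      - ε * ((inner ℝ x (W t) : ℝ) - ∫ s in (0:ℝ)..t, (inner ℝ (Xdot s) (W s) : ℝ))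
    = ‖x - x₀‖^2 / (2*t)
      + (ε/t) * (inner ℝ (x - x₀) (∫ s in (0:ℝ)..t, W s) : ℝ)
      - ε * (inner ℝ x (W t) : ℝ)
      - (ε^2/2) * (∫ s in (0:ℝ)..t, ‖W s‖^2)
      + (ε^2/(2*t)) * ‖∫ s in (0:ℝ)..t, W s‖^2 := by
  set I : EuclideanSpace ℝ (Fin d) := ∫ s in (0:ℝ)..t, W s with hI
  set J : ℝ := ∫ s in (0:ℝ)..t, ‖W s‖^2 with hJ
  have hWsq : Continuous fun s => ‖W s‖^2 := (hW.norm.pow 2)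
  have hinnW : Continuous fun s => (inner ℝ p₀ (W s) : ℝ) :=
    (continuous_const.inner hW)
  -- integral of inner ℝ p₀ (W s) equals inner ℝ p₀ I
  have hIinner : (∫ s in (0:ℝ)..t, (inner ℝ p₀ (W s) : ℝ)) = inner ℝ p₀ I := by
    rw [hI, intervalIntegral.integral_of_le ht.le, intervalIntegral.integral_of_le ht.le]
    exact integral_inner (hW.intervalIntegrable (μ := MeasureTheory.volume) 0 t).1 p₀
  -- ∫ ‖Xdot‖² = t‖p₀‖² − 2ε⟨p₀,I⟩ + ε²J
  have h1 : (∫ s in (0:ℝ)..t, ‖Xdot s‖^2)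
      = t * ‖p₀‖^2 - 2*ε*(inner ℝ p₀ I : ℝ) + ε^2 * J := by
    have : ∀ s, ‖Xdot s‖^2
        = ‖p₀‖^2 - (2*ε) * (inner ℝ p₀ (W s) : ℝ) + ε^2 * ‖W s‖^2 := by
      intro s
      rw [hXdot s, @norm_sub_sq_real, real_inner_smul_right, norm_smul]
      simp only [Real.norm_eq_abs, mul_pow, sq_abs]
      ring
    rw [intervalIntegral.integral_congr (fun s _ => this s)]
    rw [intervalIntegral.integral_add, intervalIntegral.integral_sub,
      intervalIntegral.integral_const, intervalIntegral.integral_const_mul,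
      intervalIntegral.integral_const_mul, hIinner]
    · rw [smul_eq_mul]; ring_nf; rfl
    · exact intervalIntegrable_const
    · exact (hinnW.const_smul (2*ε)).intervalIntegrable 0 t
    · exact (intervalIntegrable_const.sub ((hinnW.const_smul (2*ε)).intervalIntegrable 0 t))
    · exact (hWsq.const_smul (ε^2)).intervalIntegrable 0 t
  -- ∫ ⟨Xdot, W⟩ = ⟨p₀,I⟩ − εJ
  have h2 : (∫ s in (0:ℝ)..t, (inner ℝ (Xdot s) (W s) : ℝ)) = (inner ℝ p₀ I : ℝ) - ε * J := by
    have : ∀ s, (inner ℝ (Xdot s) (W s) : ℝ)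
        = (inner ℝ p₀ (W s) : ℝ) - ε * ‖W s‖^2 := by
      intro s
      rw [hXdot s, inner_sub_left, real_inner_smul_left, real_inner_self_eq_norm_sq]
    rw [intervalIntegral.integral_congr (fun s _ => this s)]
    rw [intervalIntegral.integral_sub, intervalIntegral.integral_const_mul, hIinner]
    · exact hinnW.intervalIntegrable 0 t
    · exact (hWsq.const_smul ε).intervalIntegrable 0 t
  rw [h1, h2]
  -- now expand p₀
  have hnp : ‖p₀‖^2 = (‖x - x₀‖^2 + 2*ε*(inner ℝ (x - x₀) I : ℝ) + ε^2 * ‖I‖^2) / t^2 := by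
    rw [hp₀, norm_smul, mul_pow, @norm_add_sq_real, real_inner_smul_right, norm_smul]
    simp only [norm_inv, Real.norm_eq_abs, mul_pow, sq_abs, abs_of_pos ht]
    field_simp
  have hip : (inner ℝ p₀ I : ℝ) = ((inner ℝ (x - x₀) I : ℝ) + ε * ‖I‖^2) / t := by
    rw [hp₀, real_inner_smul_left, inner_add_left, real_inner_smul_left,
      real_inner_self_eq_norm_sq]
    field_simp
  rw [hnp, hip]
  field_simp
  ring
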